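/- Let h : ℝ → ℝ be a decreasing, nonnegative, right-continuous function (when viewed as η ↦ h(-η) increasing in η) with lim_{x→∞} h(x) = 0, let H(r) = ∫₀^r h(x) dx, and let H₂ be the measure on ℝ with H₂((-∞,t]) = h(-t). Then for every x₂ ∈ ℝ, ∫_{(-x₂, 0]} η dH₂(η) - ∫_{(0,-x₂]} η dH₂(η) (i.e. the signed integral ∫ (1{η ≤ -x₂} − 1{η ≤ 0}) η dH₂(η) with sign conventions for x₂ of either sign) equals x₂ h(x₂) − H(x₂). -/

import Mathlib

open MeasureTheory Set Filter

theorem stmt_1 (h : ℝ → ℝ) (hanti : Antitone h) (hnonneg : ∀ x, 0 ≤ h x)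
    (hlim : Tendsto h atTop (nhds 0))
    (hrc : ∀ x : ℝ, ContinuousWithinAt (fun η => h (-η)) (Set.Ici x) x)
    (H : ℝ → ℝ) (hH : ∀ r : ℝ, H r = ∫ x in (0:ℝ)..r, h x)
    (H2 : Measure ℝ) (hH2 : ∀ t : ℝ, H2 (Set.Iic t) = ENNReal.ofReal (h (-t))) :
    ∀ x₂ : ℝ,
      (∫ η in Set.Ioc (-x₂) 0, η ∂H2) - (∫ η in Set.Ioc 0 (-x₂), η ∂H2)
        = x₂ * h x₂ - H x₂ := by
  have hIocfin : ∀ s t : ℝ, H2 (Ioc s t) ≠ ⊤ := fun s t =>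
    ne_top_of_le_ne_top (by rw [hH2]; exact ENNReal.ofReal_ne_top)
      (measure_mono Ioc_subset_Iic_self)
  have measIoc : ∀ s t : ℝ, s ≤ t → H2 (Ioc s t) = ENNReal.ofReal (h (-t) - h (-s)) := by
    intro s t hst
    rw [← Iic_sdiff_Iic, measure_diff (Iic_subset_Iic.2 hst) nullMeasurableSet_Iic
      (by rw [hH2]; exact ENNReal.ofReal_ne_top), hH2, hH2,
      ← ENNReal.ofReal_sub _ (hnonneg _)]
  intro x₂
  rcases le_or_gt 0 x₂ with hx | hx
  · -- case 0 ≤ x₂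
    have he : Ioc (0:ℝ) (-x₂) = ∅ := Ioc_eq_empty (by intro hlt; linarith)
    rw [he, setIntegral_empty, sub_zero]
    set a := -x₂ with ha
    have hfm : IsFiniteMeasure (H2.restrict (Ioc a 0)) :=
      ⟨by rw [Measure.restrict_apply_univ]; exact (hIocfin _ _).lt_top⟩
    have hmem := ae_restrict_mem (μ := H2) (measurableSet_Ioc (a := a) (b := (0:ℝ)))
    have hint : Integrable (fun η => -η) (H2.restrict (Ioc a 0)) := by
      refine Integrable.mono' (integrable_const (-a))
        (measurable_neg.aestronglyMeasurable.congr (by rfl)) ?_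
      filter_upwards [hmem] with η hη
      rw [Real.norm_eq_abs, abs_neg, abs_of_nonpos hη.2]
      linarith [hη.1]
    have hnn : 0 ≤ᵐ[H2.restrict (Ioc a 0)] fun η => -η := by
      filter_upwards [hmem] with η hη
      simp only [Pi.zero_apply]; linarith [hη.2]
    have key := hint.integral_eq_integral_meas_le hnn
    simp only [measureReal_def] at key
    have hrhs : ∀ t ∈ Ioi (0:ℝ),
        ((H2.restrict (Ioc a 0)) {η : ℝ | t ≤ -η}).toReal
          = (Ioc 0 x₂).indicator (fun s => h s - h x₂) t := by
      intro t ht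
      have hset : {η : ℝ | t ≤ -η} = Iic (-t) := by ext η; simp [le_neg]
      rw [Measure.restrict_apply' measurableSet_Ioc, hset, inter_comm, Ioc_inter_Iic]
      have hmin : (0:ℝ) ⊓ (-t) = -t := min_eq_right (by linarith [mem_Ioi.mp ht])
      rw [hmin]
      by_cases htx : t ≤ x₂
      · rw [measIoc a (-t) (by rw [ha]; linarith), indicator_of_mem (Set.mem_Ioc.mpr ⟨mem_Ioi.mp ht, htx⟩)]
        rw [neg_neg, ha, neg_neg]
        exact ENNReal.toReal_ofReal (by linarith [hanti htx])
      · rw [Ioc_eq_empty (by rw [ha]; intro hlt; exact htx (by linarith)),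
          indicator_of_notMem (fun hmem' => htx hmem'.2)]
        simp
    have hIcc : IntegrableOn h (Ioc 0 x₂) := (hanti.intervalIntegrable (a := 0) (b := x₂)).1
    have hmain : (∫ η in Ioc a 0, η ∂H2) = x₂ * h x₂ - H x₂ := by
      have h1 : (∫ η in Ioc a 0, η ∂H2) = -∫ η in Ioc a 0, -η ∂H2 := by
        rw [integral_neg, neg_neg]
      rw [h1, key, setIntegral_congr_fun measurableSet_Ioi hrhs,
        setIntegral_indicator measurableSet_Ioc,
        inter_eq_self_of_subset_right Ioc_subset_Ioi_self,
        integral_sub hIcc (integrableOn_const (by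
          rw [Real.volume_Ioc]; exact ENNReal.ofReal_ne_top))]
      have h2 : (∫ t in Ioc 0 x₂, h t) = H x₂ := by
        rw [hH, intervalIntegral.integral_of_le hx]
      have h3 : (∫ _ in Ioc 0 x₂, h x₂) = x₂ * h x₂ := by
        rw [setIntegral_const, Real.volume_real_Ioc_of_le hx, smul_eq_mul, sub_zero]
      rw [h2, h3]; ring
    exact hmain
  · -- case x₂ < 0
    have he : Ioc (-x₂) (0:ℝ) = ∅ := Ioc_eq_empty (by intro hlt; linarith)
    rw [he, setIntegral_empty, zero_sub]
    set b := -x₂ with hb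
    have hbpos : 0 < b := by rw [hb]; linarith
    have hfm : IsFiniteMeasure (H2.restrict (Ioc 0 b)) :=
      ⟨by rw [Measure.restrict_apply_univ]; exact (hIocfin _ _).lt_top⟩
    have hmem := ae_restrict_mem (μ := H2) (measurableSet_Ioc (a := (0:ℝ)) (b := b))
    have hint : Integrable (fun η : ℝ => η) (H2.restrict (Ioc 0 b)) := by
      refine Integrable.mono' (integrable_const b)
        (measurable_id.aestronglyMeasurable.congr (by rfl)) ?_
      filter_upwards [hmem] with η hη
      rw [Real.norm_eq_abs, abs_of_nonneg (le_of_lt hη.1)]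
      exact hη.2
    have hnn : 0 ≤ᵐ[H2.restrict (Ioc 0 b)] fun η : ℝ => η := by
      filter_upwards [hmem] with η hη
      simp only [Pi.zero_apply]; exact le_of_lt hη.1
    have key := hint.integral_eq_integral_meas_lt hnn
    simp only [measureReal_def] at key
    have hrhs : ∀ t ∈ Ioi (0:ℝ),
        ((H2.restrict (Ioc 0 b)) {η : ℝ | t < η}).toReal
          = (Ioc 0 b).indicator (fun s => h x₂ - h (-s)) t := by
      intro t ht
      have hset : {η : ℝ | t < η} = Ioi t := rfl
      rw [Measure.restrict_apply' measurableSet_Ioc, hset, inter_comm, Ioc_inter_Ioi]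
      have hmax : (0:ℝ) ⊔ t = t := max_eq_right (le_of_lt (mem_Ioi.mp ht))
      rw [hmax]
      by_cases htb : t ≤ b
      · rw [measIoc t b htb, indicator_of_mem (Set.mem_Ioc.mpr ⟨mem_Ioi.mp ht, htb⟩)]
        rw [hb, neg_neg]
        exact ENNReal.toReal_ofReal (by
          have : h (-t) ≤ h x₂ := hanti (by rw [hb] at htb; linarith)
          linarith)
      · rw [Ioc_eq_empty (fun hlt => htb (le_of_lt hlt)),
          indicator_of_notMem (fun hmem' => htb hmem'.2)]
        simp
    have hmono : Monotone fun t : ℝ => h (-t) := fun s t hst => hanti (by linarith)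
    have hInt : IntegrableOn (fun t : ℝ => h (-t)) (Ioc 0 b) :=
      (hmono.intervalIntegrable (a := 0) (b := b)).1
    have hcomp : (∫ t in Ioc 0 b, h (-t)) = -H x₂ := by
      rw [← intervalIntegral.integral_of_le (le_of_lt hbpos),
        intervalIntegral.integral_comp_neg h, hb, neg_neg, neg_zero, hH,
        ← intervalIntegral.integral_symm]
    have hmain : (∫ η in Ioc 0 b, η ∂H2) = -x₂ * h x₂ + H x₂ := by
      rw [key, setIntegral_congr_fun measurableSet_Ioi hrhs,
        setIntegral_indicator measurableSet_Ioc,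
        inter_eq_self_of_subset_right Ioc_subset_Ioi_self,
        integral_sub (integrableOn_const (C := h x₂) (by
          rw [Real.volume_Ioc]; exact ENNReal.ofReal_ne_top)) hInt]
      rw [hcomp, setIntegral_const, Real.volume_real_Ioc_of_le (le_of_lt hbpos), smul_eq_mul, sub_zero,
        hb]
      ring
    rw [hmain]; ring
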